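/- For every λ ≥ 0 and every θ ∈ ℝ, with g₂(θ) = (1/3)e^{iθ} + 1/2 − e^{−iθ} + (1/6)e^{−2iθ}, one has 1 + (λ/2)g₂(θ) ≠ 0 and |(1 − (λ/2)g₂(θ))/(1 + (λ/2)g₂(θ))| ≤ 1. That is, the Crank–Nicolson time discretisation combined with the spatial operator δ₂ is unconditionally von Neumann stable. -/

import Mathlib

lemma cayley_aux (z : ℂ) (hz : 0 ≤ z.re) :
    1 + z ≠ 0 ∧ ‖(1 - z) / (1 + z)‖ ≤ 1 := by
  have hns : 0 < Complex.normSq (1 + z) := by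
    simp only [Complex.normSq_apply, Complex.add_re, Complex.add_im, Complex.one_re,
      Complex.one_im, zero_add]
    nlinarith [sq_nonneg z.im]
  have hne : 1 + z ≠ 0 := by
    intro h
    rw [h] at hns
    simp at hns
  refine ⟨hne, ?_⟩
  rw [norm_div, div_le_one (norm_pos_iff.mpr hne)]
  have : Complex.normSq (1 - z) ≤ Complex.normSq (1 + z) := by
    simp only [Complex.normSq_apply, Complex.add_re, Complex.add_im,
      Complex.sub_re, Complex.sub_im, Complex.one_re, Complex.one_im]
    nlinarith
  have h1 := Complex.sq_norm (1 - z)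
  have h2 := Complex.sq_norm (1 + z)
  nlinarith [norm_nonneg (1 - z), norm_nonneg (1 + z)]

/-- Unconditional von Neumann stability of Crank–Nicolson with the spatial
operator `δ₂`: for every `λ ≥ 0` and `θ`, with
`g₂(θ) = (1/3)e^{iθ} + 1/2 - e^{-iθ} + (1/6)e^{-2iθ}`, one has
`1 + (λ/2) g₂(θ) ≠ 0` and `|(1 - (λ/2) g₂(θ))/(1 + (λ/2) g₂(θ))| ≤ 1`. -/
theorem stmt_16 (lam : ℝ) (hlam : 0 ≤ lam) (θ : ℝ) :
    1 + ((lam : ℂ) / 2) * ((1 / 3 : ℂ) * Complex.exp ((θ : ℂ) * Complex.I) + 1 / 2 -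
        Complex.exp (-(θ : ℂ) * Complex.I) +
        (1 / 6 : ℂ) * Complex.exp (-2 * (θ : ℂ) * Complex.I)) ≠ 0 ∧
      ‖(1 - ((lam : ℂ) / 2) * ((1 / 3 : ℂ) * Complex.exp ((θ : ℂ) * Complex.I) + 1 / 2 -
            Complex.exp (-(θ : ℂ) * Complex.I) +
            (1 / 6 : ℂ) * Complex.exp (-2 * (θ : ℂ) * Complex.I))) /
          (1 + ((lam : ℂ) / 2) * ((1 / 3 : ℂ) * Complex.exp ((θ : ℂ) * Complex.I) + 1 / 2 -
            Complex.exp (-(θ : ℂ) * Complex.I) +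
            (1 / 6 : ℂ) * Complex.exp (-2 * (θ : ℂ) * Complex.I)))‖ ≤ 1 := by
  set z : ℂ := ((lam : ℂ) / 2) * ((1 / 3 : ℂ) * Complex.exp ((θ : ℂ) * Complex.I) + 1 / 2 -
      Complex.exp (-(θ : ℂ) * Complex.I) +
      (1 / 6 : ℂ) * Complex.exp (-2 * (θ : ℂ) * Complex.I)) with hzdef
  have hre : 0 ≤ z.re := by
    have A : (Complex.exp ((θ : ℂ) * Complex.I)).re = Real.cos θ :=
      Complex.exp_ofReal_mul_I_re θ
    have B : (Complex.exp (-(θ : ℂ) * Complex.I)).re = Real.cos (-θ) := by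
      rw [show -(θ : ℂ) = ((-θ : ℝ) : ℂ) by push_cast; ring]
      exact Complex.exp_ofReal_mul_I_re _
    have C : (Complex.exp (-2 * (θ : ℂ) * Complex.I)).re = Real.cos (-2 * θ) := by
      rw [show -2 * (θ : ℂ) = ((-2 * θ : ℝ) : ℂ) by push_cast; ring]
      exact Complex.exp_ofReal_mul_I_re _
    rw [hzdef]
    simp only [Complex.mul_re, Complex.mul_im, Complex.add_re, Complex.add_im,
      Complex.sub_re, Complex.sub_im, Complex.one_re, Complex.one_im,
      Complex.ofReal_re, Complex.ofReal_im, Complex.div_ofNat_re, Complex.div_ofNat_im,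
      A, B, C, zero_div, zero_mul, mul_zero, sub_zero, zero_sub, zero_add, add_zero, neg_zero]
    have hc2 : Real.cos (-2 * θ) = 2 * Real.cos θ ^ 2 - 1 := by
      rw [show (-2 : ℝ) * θ = -(2 * θ) by ring, Real.cos_neg, Real.cos_two_mul]
    have hcn : Real.cos (-θ) = Real.cos θ := Real.cos_neg θ
    rw [hc2, hcn]
    nlinarith [sq_nonneg (1 - Real.cos θ), hlam]
  exact cayley_aux z hre
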